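/- For every n ∈ ℕ, the Jackson q-integral of the q-Frobenius–Euler polynomial over [0,1] satisfies ∫₀^1 H_{n,q}(u|λ) d_q u = (1/[n+1]_q) · ( H_{n+1,q}(1|λ) − H_{n+1,q}(λ) ). -/

import Mathlib

open Finset Polynomial

/-- The `q`-integer `[n]_q = (1 - q^n)/(1 - q)` viewed in `ℂ`. -/
noncomputable def qInt (q : ℝ) (n : ℕ) : ℂ := (1 - (q : ℂ) ^ n) / (1 - (q : ℂ))

/-- The `q`-factorial `[n]_q! = ∏_{j=1}^n [j]_q`. -/
noncomputable def qFact (q : ℝ) (n : ℕ) : ℂ := ∏ j ∈ Finset.range n, qInt q (j + 1)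

/-- The `q`-binomial coefficient `[n]_q!/([k]_q! [n-k]_q!)`. -/
noncomputable def qBinom (q : ℝ) (n k : ℕ) : ℂ := qFact q n / (qFact q k * qFact q (n - k))

/-- The formal `q`-exponential `e_q(t) = ∑ t^n/[n]_q!` in `ℂ[x][[t]]`. -/
noncomputable def qExp (q : ℝ) : PowerSeries (Polynomial ℂ) :=
  PowerSeries.mk fun n => Polynomial.C (1 / qFact q n)

/-- The formal series `e_q(xt) = ∑ x^n t^n/[n]_q!` in `ℂ[x][[t]]`. -/
noncomputable def qExpX (q : ℝ) : PowerSeries (Polynomial ℂ) :=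
  PowerSeries.mk fun n => Polynomial.C (1 / qFact q n) * Polynomial.X ^ n

/-- `H : ℕ → ℂ[x]` is the family of `q`-Frobenius-Euler polynomials `H_{n,q}(x|λ)`:
`(∑ H_n t^n/[n]_q!) ⬝ (e_q(t) - λ) = (1 - λ) e_q(xt)` in `ℂ[x][[t]]`. -/
def IsqFrobeniusEuler (q : ℝ) (lam : ℂ) (H : ℕ → Polynomial ℂ) : Prop :=
  (PowerSeries.mk fun n => Polynomial.C (1 / qFact q n) * H n) *
      (qExp q - PowerSeries.C (Polynomial.C lam)) =
    PowerSeries.C (Polynomial.C (1 - lam)) * qExpX q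

/-- The Jackson `q`-integral `∫₀^z p(u) d_q u = (1-q) z ∑_{a≥0} q^a p(q^a z)`. -/
noncomputable def jacksonIntegral (q : ℝ) (p : Polynomial ℂ) (z : ℂ) : ℂ :=
  (1 - (q : ℂ)) * z * ∑' a : ℕ, (q : ℂ) ^ a * p.eval ((q : ℂ) ^ a * z)

lemma one_sub_pow_ne (q : ℝ) (hq0 : 0 < q) (hq1 : q < 1) (m : ℕ) (hm : m ≠ 0) :
    (1:ℂ) - (q:ℂ)^m ≠ 0 := by
  have h1 : q^m < 1 := pow_lt_one₀ hq0.le hq1 hm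
  have : ((1 - q^m : ℝ) : ℂ) ≠ 0 := by
    exact_mod_cast ne_of_gt (by linarith : (0:ℝ) < 1 - q^m)
  simpa [sub_ne_zero] using this

lemma qInt_ne_zero (q : ℝ) (hq0 : 0 < q) (hq1 : q < 1) (n : ℕ) : qInt q (n+1) ≠ 0 := by
  have h2 : (1:ℂ) - (q:ℂ) ≠ 0 := by
    simpa using one_sub_pow_ne q hq0 hq1 1 one_ne_zero
  exact div_ne_zero (one_sub_pow_ne q hq0 hq1 (n+1) (Nat.succ_ne_zero n)) h2

lemma qFact_ne_zero (q : ℝ) (hq0 : 0 < q) (hq1 : q < 1) (n : ℕ) : qFact q n ≠ 0 :=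
  Finset.prod_ne_zero_iff.2 fun j _ => qInt_ne_zero q hq0 hq1 j

lemma qFact_succ (q : ℝ) (n : ℕ) : qFact q (n+1) = qFact q n * qInt q (n+1) :=
  Finset.prod_range_succ _ n

lemma one_sub_pow_eq (q : ℝ) (n : ℕ) (h2 : (1:ℂ) - (q:ℂ) ≠ 0) :
    (1:ℂ) - (q:ℂ)^(n+1) = (1 - (q:ℂ)) * qInt q (n+1) := by
  rw [qInt, mul_div_cancel₀ _ h2]

noncomputable def qphi (q : ℝ) : Polynomial ℂ →+* Polynomial ℂ :=
  Polynomial.eval₂RingHom Polynomial.C (Polynomial.C (q:ℂ) * Polynomial.X)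

lemma qphi_CX (q : ℝ) (a : ℂ) (n : ℕ) :
    qphi q (Polynomial.C a * Polynomial.X ^ n) = Polynomial.C (a * (q:ℂ)^n) * Polynomial.X ^ n := by
  simp only [qphi, coe_eval₂RingHom, Polynomial.eval₂_mul, Polynomial.eval₂_C,
    Polynomial.eval₂_X_pow, mul_pow, ← Polynomial.C_pow, Polynomial.C_mul]
  ring

lemma qphi_C (q : ℝ) (a : ℂ) : qphi q (Polynomial.C a) = Polynomial.C a := by
  simp [qphi]


lemma qFE_coeff (q : ℝ) (hq0 : 0 < q) (hq1 : q < 1) (lam : ℂ) (hlam : lam ≠ 1)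
    (H : ℕ → Polynomial ℂ) (hH : IsqFrobeniusEuler q lam H) (n : ℕ) :
    Polynomial.C (1 / qFact q (n+1)) * (H (n+1) - qphi q (H (n+1)))
      = (Polynomial.C (1 - (q:ℂ)) * Polynomial.X) * (Polynomial.C (1 / qFact q n) * H n) := by
  classical
  have h2 : (1:ℂ) - (q:ℂ) ≠ 0 := by simpa using one_sub_pow_ne q hq0 hq1 1 one_ne_zero
  set F : PowerSeries (Polynomial ℂ) :=
    PowerSeries.mk (fun m => Polynomial.C (1 / qFact q m) * H m) with hF
  set G : PowerSeries (Polynomial ℂ) :=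
    qExp q - PowerSeries.C (Polynomial.C lam) with hG
  set Φ : PowerSeries (Polynomial ℂ) →+* PowerSeries (Polynomial ℂ) :=
    PowerSeries.map (qphi q) with hΦ
  set D : PowerSeries (Polynomial ℂ) :=
    PowerSeries.C (Polynomial.C (1 - (q:ℂ)) * Polynomial.X) * PowerSeries.X with hD
  have hΦexp : Φ (qExp q) = qExp q := by
    refine PowerSeries.ext fun m => ?_
    rw [hΦ, PowerSeries.coeff_map]
    simp only [qExp, PowerSeries.coeff_mk, qphi_C]
  have hΦC : ∀ a : ℂ, Φ (PowerSeries.C (Polynomial.C a))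
      = PowerSeries.C (Polynomial.C a) := by
    intro a
    rw [hΦ, PowerSeries.map_C, qphi_C]
  have hkey : qExpX q - Φ (qExpX q) = D * qExpX q := by
    refine PowerSeries.ext fun m => ?_
    rw [map_sub, hΦ, PowerSeries.coeff_map]
    simp only [qExpX, PowerSeries.coeff_mk, qphi_CX]
    rcases m with _ | m
    · rw [hD, mul_assoc, PowerSeries.coeff_C_mul]
      simp
    · rw [hD, mul_assoc, PowerSeries.coeff_C_mul, PowerSeries.coeff_succ_X_mul,
        PowerSeries.coeff_mk]
      rw [← sub_mul, ← Polynomial.C_sub]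
      have hm : qFact q (m+1) ≠ 0 := qFact_ne_zero q hq0 hq1 (m+1)
      have hm0 : qFact q m ≠ 0 := qFact_ne_zero q hq0 hq1 m
      have hc : (1 / qFact q (m+1) - 1 / qFact q (m+1) * (q:ℂ)^(m+1))
          = (1 - (q:ℂ)) * (1 / qFact q m) := by
        have hqi := qInt_ne_zero q hq0 hq1 m
        rw [← mul_one_sub, one_sub_pow_eq q m h2, qFact_succ]
        field_simp
      rw [hc, Polynomial.C_mul]
      rw [pow_succ]
      ring
  have hmap : (Φ F) * G = PowerSeries.C (Polynomial.C (1 - lam)) * Φ (qExpX q) := by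
    have h := congrArg Φ hH
    rwa [map_mul, map_sub, hΦexp, hΦC, map_mul, hΦC] at h
  have hsub : (F - Φ F) * G = D * (F * G) := by
    calc (F - Φ F) * G = F * G - (Φ F) * G := by ring
    _ = PowerSeries.C (Polynomial.C (1 - lam)) * qExpX q
        - PowerSeries.C (Polynomial.C (1 - lam)) * Φ (qExpX q) := by rw [hH, hmap]
    _ = PowerSeries.C (Polynomial.C (1 - lam)) * (D * qExpX q) := by
        rw [← mul_sub, hkey]
    _ = D * (PowerSeries.C (Polynomial.C (1 - lam)) * qExpX q) := by ring
    _ = D * (F * G) := by rw [hH]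
  have hGne : G ≠ 0 := by
    intro h
    have h0 := congrArg (PowerSeries.constantCoeff) h
    rw [hG, map_sub, PowerSeries.constantCoeff_C, map_zero] at h0
    have : (PowerSeries.constantCoeff) (qExp q) = Polynomial.C 1 := by
      simp [qExp, qFact, ← PowerSeries.coeff_zero_eq_constantCoeff]
    rw [this, sub_eq_zero] at h0
    exact hlam (by simpa using congrArg (fun p => Polynomial.coeff p 0) h0.symm)
  have hcancel : F - Φ F = D * F := by
    have h : (F - Φ F) * G = (D * F) * G := by rw [hsub]; ring
    exact mul_right_cancel₀ hGne h
  have h := congrArg (PowerSeries.coeff (n+1)) hcancel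
  rw [map_sub, hΦ, PowerSeries.coeff_map, hF, PowerSeries.coeff_mk,
    hD, mul_assoc, PowerSeries.coeff_C_mul, PowerSeries.coeff_succ_X_mul, PowerSeries.coeff_mk,
    map_mul, qphi_C] at h
  rw [mul_sub]
  exact h


lemma qphi_eval (q : ℝ) (p : Polynomial ℂ) (x : ℂ) :
    (qphi q p).eval x = p.eval ((q:ℂ) * x) := by
  have h : qphi q p = p.comp (Polynomial.C (q:ℂ) * Polynomial.X) := rfl
  rw [h, Polynomial.eval_comp]
  simp

lemma qFE_step (q : ℝ) (hq0 : 0 < q) (hq1 : q < 1) (lam : ℂ) (hlam : lam ≠ 1)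
    (H : ℕ → Polynomial ℂ) (hH : IsqFrobeniusEuler q lam H) (n : ℕ) (x : ℂ) :
    (H (n+1)).eval x - (H (n+1)).eval ((q:ℂ)*x)
      = (1 - (q:ℂ)) * qInt q (n+1) * x * (H n).eval x := by
  have h := congrArg (Polynomial.eval x) (qFE_coeff q hq0 hq1 lam hlam H hH n)
  simp only [Polynomial.eval_mul, Polynomial.eval_sub, Polynomial.eval_C, Polynomial.eval_X,
    qphi_eval] at h
  have h1 : qFact q (n+1) ≠ 0 := qFact_ne_zero q hq0 hq1 (n+1)
  have h0 : qFact q n ≠ 0 := qFact_ne_zero q hq0 hq1 n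
  have hqi := qInt_ne_zero q hq0 hq1 n
  rw [qFact_succ] at h h1
  field_simp at h ⊢
  linear_combination h

lemma summable_eval (q : ℝ) (hq0 : 0 < q) (hq1 : q < 1) (p : Polynomial ℂ) :
    Summable (fun a : ℕ => (q:ℂ)^a * p.eval ((q:ℂ)^a)) := by
  have hrw : ∀ a : ℕ, (q:ℂ)^a * p.eval ((q:ℂ)^a)
      = ∑ k ∈ p.support, p.coeff k * ((q:ℂ)^(k+1))^a := by
    intro a
    rw [Polynomial.eval_eq_sum, Polynomial.sum, Finset.mul_sum]
    refine Finset.sum_congr rfl fun k _ => ?_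
    rw [pow_right_comm, pow_succ']
    ring
  rw [funext hrw]
  refine summable_sum fun k _ => Summable.mul_left _ ?_
  refine summable_geometric_of_norm_lt_one ?_
  rw [norm_pow]
  have : ‖(q:ℂ)‖ = q := by
    rw [Complex.norm_real, Real.norm_eq_abs, abs_of_pos hq0]
  rw [this]
  exact pow_lt_one₀ hq0.le hq1 (Nat.succ_ne_zero k)

/-- `∫₀^1 H_{n,q}(u|λ) d_q u = (1/[n+1]_q)(H_{n+1,q}(1|λ) - H_{n+1,q}(λ))`. -/
theorem jacksonIntegral_qFrobeniusEuler_zero_one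
    (q : ℝ) (hq0 : 0 < q) (hq1 : q < 1) (lam : ℂ) (hlam : lam ≠ 1)
    (H : ℕ → Polynomial ℂ) (hH : IsqFrobeniusEuler q lam H) (n : ℕ) :
    jacksonIntegral q (H n) 1 =
      (1 / qInt q (n + 1)) * ((H (n + 1)).eval 1 - (H (n + 1)).eval 0) := by
  have hqi := qInt_ne_zero q hq0 hq1 n
  set g : ℂ → ℂ := fun x => (H (n+1)).eval x with hg
  -- the summable series
  have hsum : Summable (fun a : ℕ => (q:ℂ)^a * (H n).eval ((q:ℂ)^a)) :=
    summable_eval q hq0 hq1 (H n)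
  -- telescoping identity for each term
  have hterm : ∀ a : ℕ, (1 - (q:ℂ)) * qInt q (n+1) * ((q:ℂ)^a * (H n).eval ((q:ℂ)^a))
      = g ((q:ℂ)^a) - g ((q:ℂ)^(a+1)) := by
    intro a
    have h := qFE_step q hq0 hq1 lam hlam H hH n ((q:ℂ)^a)
    rw [← pow_succ'] at h
    simp only [hg]
    rw [h]
    ring
  -- telescoping sum
  have hsum2 : Summable (fun a : ℕ => g ((q:ℂ)^a) - g ((q:ℂ)^(a+1))) := by
    rw [← funext hterm]
    exact hsum.mul_left _
  have hlim : Filter.Tendsto (fun N : ℕ => g 1 - g ((q:ℂ)^N)) Filter.atTop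
      (nhds (g 1 - g 0)) := by
    refine Filter.Tendsto.sub tendsto_const_nhds ?_
    have hq : ‖(q:ℂ)‖ < 1 := by
      rw [Complex.norm_real, Real.norm_eq_abs, abs_of_pos hq0]
      exact hq1
    have hcont : Continuous g := by
      simpa [hg] using (H (n+1)).continuous
    exact (hcont.tendsto 0).comp (tendsto_pow_atTop_nhds_zero_of_norm_lt_one hq)
  have htel : (∑' a : ℕ, (g ((q:ℂ)^a) - g ((q:ℂ)^(a+1)))) = g 1 - g 0 := by
    have hps : ∀ N : ℕ, ∑ a ∈ Finset.range N, (g ((q:ℂ)^a) - g ((q:ℂ)^(a+1)))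
        = g 1 - g ((q:ℂ)^N) := by
      intro N
      have := Finset.sum_range_sub' (fun a => g ((q:ℂ)^a)) N
      simpa using this
    have h1 := hsum2.hasSum.tendsto_sum_nat
    rw [funext hps] at h1
    exact tendsto_nhds_unique h1 hlim
  -- put it together
  have hmain : qInt q (n+1) * jacksonIntegral q (H n) 1 = g 1 - g 0 := by
    rw [jacksonIntegral]
    simp only [mul_one]
    rw [← htel, ← tsum_mul_left, ← tsum_mul_left]
    refine tsum_congr fun a => ?_
    rw [← hterm a]
    ring
  rw [← hmain]
  field_simp
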